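/- Assume the off-manifold Hessian block satisfies ∇²_{θ⊥} f ⪯ c_u·σ⊥²·I_g, fix a step size 0 < ᾱ ≤ 1/(c_u·σ∥²) (so ᾱ·c_u·σ⊥²/2 < 1), and suppose at iterate θ^{(t)} that the off-manifold gradient step θ⊥^{(t+1)} = θ⊥^{(t)} − ᾱ·∇⊥f(θ^{(t)}) satisfies f(θ∥^{(t)}, θ*⊥) ≤ f(θ∥^{(t)}, θ⊥^{(t+1)}). Then the off-manifold gradient norm is bounded by the coordinate-wise loss gap: ‖∇⊥f(θ^{(t)})‖² ≤ (f(θ^{(t)}) − f(θ∥^{(t)}, θ*⊥))·ᾱ^{−1}·(1 − ᾱ·c_u·σ⊥²/2)^{−1}. -/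

import Mathlib

open Real

noncomputable section

/-- Gradient of `f` in the off-manifold block (last `g` coordinates). -/
noncomputable def gradOff {d g : ℕ}
    (f : EuclideanSpace ℝ (Fin d) × EuclideanSpace ℝ (Fin g) → ℝ)
    (θ : EuclideanSpace ℝ (Fin d) × EuclideanSpace ℝ (Fin g)) : EuclideanSpace ℝ (Fin g) :=
  gradient (fun u => f (θ.1, u)) θ.2

theorem off_gradient_norm_bound (d g : ℕ) (cu σon σoff : ℝ)
    (hcu : 0 < cu) (hσoff : 0 < σoff) (hσ : σoff < σon)
    (f : EuclideanSpace ℝ (Fin d) × EuclideanSpace ℝ (Fin g) → ℝ)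
    (hf : ContDiff ℝ 2 f)
    (hupperOff : ∀ (θ : EuclideanSpace ℝ (Fin d) × EuclideanSpace ℝ (Fin g))
      (v : EuclideanSpace ℝ (Fin g)),
      fderiv ℝ (fderiv ℝ (fun u => f (θ.1, u))) θ.2 v v ≤ cu * σoff ^ 2 * ‖v‖ ^ 2)
    (θstar : EuclideanSpace ℝ (Fin d) × EuclideanSpace ℝ (Fin g))
    (hmin : ∀ θ, f θstar ≤ f θ)
    (ᾱ : ℝ) (hᾱ : 0 < ᾱ) (hᾱ' : ᾱ ≤ 1 / (cu * σon ^ 2))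
    (θt : EuclideanSpace ℝ (Fin d) × EuclideanSpace ℝ (Fin g))
    (hcoord : f (θt.1, θstar.2) ≤ f (θt.1, θt.2 - ᾱ • gradOff f θt)) :
    ᾱ * cu * σoff ^ 2 / 2 < 1 ∧
    ‖gradOff f θt‖ ^ 2 ≤
      (f θt - f (θt.1, θstar.2)) * ᾱ⁻¹ * (1 - ᾱ * cu * σoff ^ 2 / 2)⁻¹ := by
  -- Part 1
  have hσon : 0 < σon := hσoff.trans hσ
  have hcs : 0 < cu * σon ^ 2 := by positivity
  have hle1 : ᾱ * (cu * σon ^ 2) ≤ 1 := by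
    rw [le_div_iff₀ hcs] at hᾱ'; linarith
  have hσ2 : σoff ^ 2 < σon ^ 2 := by nlinarith
  have hlt1 : ᾱ * cu * σoff ^ 2 < 1 := by nlinarith [mul_pos hᾱ hcu]
  have hpos : 0 < 1 - ᾱ * cu * σoff ^ 2 / 2 := by
    have : 0 < ᾱ * cu * σoff ^ 2 := by positivity
    linarith
  refine ⟨by linarith, ?_⟩
  -- Setup
  set L : ℝ := cu * σoff ^ 2 with hL
  set φ : EuclideanSpace ℝ (Fin g) → ℝ := fun u => f (θt.1, u) with hφdef
  have hφ : ContDiff ℝ 2 φ := hf.comp (ContDiff.prodMk contDiff_const contDiff_id)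
  have hφd : Differentiable ℝ φ := hφ.differentiable (by norm_num)
  have hDφ : Differentiable ℝ (fderiv ℝ φ) :=
    (hφ.fderiv_right (m := 1) (by norm_num)).differentiable one_ne_zero
  set G : EuclideanSpace ℝ (Fin g) := gradOff f θt with hGdef
  set v : EuclideanSpace ℝ (Fin g) := -(ᾱ • G) with hvdef
  set γ : ℝ → EuclideanSpace ℝ (Fin g) := fun s => θt.2 + s • v with hγdef
  have hγ : ∀ s : ℝ, HasDerivAt γ v s := by
    intro s
    exact (((hasDerivAt_id s).smul_const v).const_add θt.2).congr_deriv (by simp)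
  set D1 : ℝ → ℝ := fun s => fderiv ℝ φ (γ s) v with hD1def
  have hg : ∀ s : ℝ, HasDerivAt (fun s => φ (γ s)) (D1 s) s := fun s =>
    (hφd (γ s)).hasFDerivAt.comp_hasDerivAt s (hγ s)
  have hD1 : ∀ s : ℝ, HasDerivAt D1 (fderiv ℝ (fderiv ℝ φ) (γ s) v v) s := by
    intro s
    have h1 : HasDerivAt (fun s => fderiv ℝ φ (γ s)) (fderiv ℝ (fderiv ℝ φ) (γ s) v) s :=
      (hDφ (γ s)).hasFDerivAt.comp_hasDerivAt s (hγ s)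
    simpa using h1.clm_apply (hasDerivAt_const s v)
  have hbound : ∀ s : ℝ, fderiv ℝ (fderiv ℝ φ) (γ s) v v ≤ L * ‖v‖ ^ 2 := fun s =>
    hupperOff (θt.1, γ s) v
  have hLv : 0 ≤ L * ‖v‖ ^ 2 := by positivity
  -- χ step: D1 s ≤ D1 0 + s * (L * ‖v‖^2) for s ≥ 0
  have hχmono : ∀ s : ℝ, 0 ≤ s → D1 s ≤ D1 0 + s * (L * ‖v‖ ^ 2) := by
    intro s hs
    set χ : ℝ → ℝ := fun s => D1 s - s * (L * ‖v‖ ^ 2) with hχdef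
    have hχ : ∀ t : ℝ, HasDerivAt χ (fderiv ℝ (fderiv ℝ φ) (γ t) v v - L * ‖v‖ ^ 2) t := by
      intro t
      exact ((hD1 t).sub ((hasDerivAt_id t).mul_const (L * ‖v‖ ^ 2))).congr_deriv (by simp)
    have hanti : Antitone χ := by
      apply antitone_of_deriv_nonpos (fun t => (hχ t).differentiableAt)
      intro t
      rw [(hχ t).deriv]
      have := hbound t
      linarith
    have := hanti hs
    simp only [χ, zero_mul, sub_zero] at this
    linarith
  -- ψ step: descent inequality
  have hdescent : φ (γ 1) ≤ φ (γ 0) + D1 0 + (L * ‖v‖ ^ 2) / 2 := by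
    set ψ : ℝ → ℝ := fun s => φ (γ s) - s * D1 0 - (L * ‖v‖ ^ 2) / 2 * s ^ 2 with hψdef
    have hψ : ∀ t : ℝ, HasDerivAt ψ (D1 t - D1 0 - (L * ‖v‖ ^ 2) / 2 * (2 * t)) t := by
      intro t
      have := ((hg t).sub ((hasDerivAt_id t).mul_const (D1 0))).sub
        ((hasDerivAt_pow 2 t).const_mul ((L * ‖v‖ ^ 2) / 2))
      exact this.congr_deriv (by ring)
    have hanti : AntitoneOn ψ (Set.Icc 0 1) := by
      apply antitoneOn_of_deriv_nonpos (convex_Icc 0 1)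
        (fun t _ => (hψ t).differentiableAt.continuousAt.continuousWithinAt)
        (fun t _ => (hψ t).differentiableAt.differentiableWithinAt)
      intro t ht
      rw [interior_Icc] at ht
      rw [(hψ t).deriv]
      have h1 := hχmono t ht.1.le
      nlinarith
    have := hanti (Set.left_mem_Icc.2 zero_le_one) (Set.right_mem_Icc.2 zero_le_one) zero_le_one
    simp only [ψ, zero_mul, sub_zero, one_pow, mul_one, one_mul] at this
    linarith [this, sq_nonneg (1:ℝ)]
  -- Identify quantities
  have hγ0 : γ 0 = θt.2 := by simp [γ]
  have hγ1 : γ 1 = θt.2 - ᾱ • G := by simp [γ, v, sub_eq_add_neg]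
  have hD10 : D1 0 = -(ᾱ * ‖G‖ ^ 2) := by
    have hGrad : fderiv ℝ φ θt.2 v = inner ℝ G v := by
      rw [hGdef]
      show fderiv ℝ φ θt.2 v = @inner ℝ _ _ (gradient (fun u => f (θt.1, u)) θt.2) v
      rw [show (fun u => f (θt.1, u)) = φ from rfl]
      rw [gradient, InnerProductSpace.toDual_symm_apply]
    simp only [D1, hγ0, hGrad]
    rw [hvdef, inner_neg_right, real_inner_smul_right, real_inner_self_eq_norm_sq]
  have hnv : ‖v‖ ^ 2 = ᾱ ^ 2 * ‖G‖ ^ 2 := by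
    rw [hvdef, norm_neg, norm_smul, mul_pow, Real.norm_eq_abs, sq_abs]
  -- Combine
  have hφ0 : φ (γ 0) = f θt := by rw [hγ0]
  have hφ1 : f (θt.1, θstar.2) ≤ φ (γ 1) := by rw [hγ1]; exact hcoord
  have hkey : ᾱ * (1 - ᾱ * L / 2) * ‖G‖ ^ 2 ≤ f θt - f (θt.1, θstar.2) := by
    have := hdescent
    rw [hD10, hnv, hφ0] at this
    nlinarith [hφ1]
  have hc : 0 < ᾱ * (1 - ᾱ * cu * σoff ^ 2 / 2) := by positivity
  have hfinal : ‖G‖ ^ 2 ≤ (f θt - f (θt.1, θstar.2)) / (ᾱ * (1 - ᾱ * cu * σoff ^ 2 / 2)) := by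
    rw [le_div_iff₀ hc]
    calc ‖G‖ ^ 2 * (ᾱ * (1 - ᾱ * cu * σoff ^ 2 / 2)) = ᾱ * (1 - ᾱ * L / 2) * ‖G‖ ^ 2 := by
          rw [hL]; ring
      _ ≤ _ := hkey
  calc ‖G‖ ^ 2 ≤ (f θt - f (θt.1, θstar.2)) / (ᾱ * (1 - ᾱ * cu * σoff ^ 2 / 2)) := hfinal
    _ = (f θt - f (θt.1, θstar.2)) * ᾱ⁻¹ * (1 - ᾱ * cu * σoff ^ 2 / 2)⁻¹ := by
        rw [div_eq_mul_inv, mul_inv]; ring
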